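/- (Lemma 7.2: implicit derivative of the extremal point.) Fix N ∈ ℕ, k ∈ {1,…,N}, a ∈ ℝ^N, and g⋆ > 0. Let g : ℝ → ℝ be differentiable at 0 with g(0) = g⋆, and suppose there is ε₀ > 0 such that for every ε with |ε| < ε₀ the derivative of t ↦ Z_N(t; a + ε·eₖ) vanishes at t = g(ε), where eₖ is the k-th standard basis vector (so g(ε) is a critical point of the perturbed section). Suppose also that D := (the second derivative of t ↦ Z_N(t; a) at g⋆) is nonzero. Then g'(0) = sin(θ(g⋆) − log(k+1)·g⋆)·log(g⋆/(2π(k+1)²)) / (2·√(k+1)·D). In particular, if a = 0 and g⋆ > 2π satisfies θ(g⋆) = π·n for some n ∈ ℕ, then D = ((−1)^{n+1}/4)·(log(g⋆/(2π)))² ≠ 0 and g'(0) = 2·(−1)^{n+1}·sin(θ(g⋆) − log(k+1)·g⋆)·log(g⋆/(2π(k+1)²)) / (√(k+1)·(log(g⋆/(2π)))²). -/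

import Mathlib

/-- The Riemann–Siegel theta function (approximate form):
`θ(t) = (t/2)·log(t/(2π)) − t/2 − π/8`. -/
noncomputable def rsTheta (t : ℝ) : ℝ :=
  t / 2 * Real.log (t / (2 * Real.pi)) - t / 2 - Real.pi / 8

/-- The `N`-th section
`Z_N(t; a) = cos(θ(t)) + Σ_{k=1}^N (aₖ/√(k+1))·cos(θ(t) − log(k+1)·t)`,
with `a : Fin N → ℝ` and the coordinate `k : Fin N` playing the role of the
paper's index `k+1 = k.val + 2`. -/
noncomputable def sectionZ (N : ℕ) (t : ℝ) (a : Fin N → ℝ) : ℝ :=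
  Real.cos (rsTheta t) +
    ∑ k : Fin N, a k / Real.sqrt ((k : ℕ) + 2) *
      Real.cos (rsTheta t - Real.log ((k : ℕ) + 2) * t)

noncomputable def th1 (t : ℝ) : ℝ := Real.log (t / (2 * Real.pi)) / 2

lemma hasDerivAt_rsTheta {t : ℝ} (ht : 0 < t) : HasDerivAt rsTheta (th1 t) t := by
  have h2pi : (0:ℝ) < 2 * Real.pi := by positivity
  have hne : t / (2 * Real.pi) ≠ 0 := by positivity
  have hlog : HasDerivAt (fun t : ℝ => Real.log (t / (2 * Real.pi))) (1 / t) t := by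
    have := (Real.hasDerivAt_log hne).comp t
      ((hasDerivAt_id t).div_const (2 * Real.pi))
    refine this.congr_deriv ?_
    field_simp
  have h1 : HasDerivAt (fun t : ℝ => t / 2 * Real.log (t / (2 * Real.pi)))
      (1 / 2 * Real.log (t / (2 * Real.pi)) + t / 2 * (1 / t)) t :=
    ((hasDerivAt_id t).div_const 2).mul hlog
  have := (h1.sub ((hasDerivAt_id t).div_const 2)).sub_const (Real.pi / 8)
  refine this.congr_deriv ?_
  unfold th1
  field_simp
  ring

lemma hasDerivAt_th1 {t : ℝ} (ht : 0 < t) : HasDerivAt th1 (1 / (2 * t)) t := by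
  have hne : t / (2 * Real.pi) ≠ 0 := by positivity
  have hlog : HasDerivAt (fun t : ℝ => Real.log (t / (2 * Real.pi))) (1 / t) t := by
    have := (Real.hasDerivAt_log hne).comp t
      ((hasDerivAt_id t).div_const (2 * Real.pi))
    refine this.congr_deriv ?_
    field_simp
  have := hlog.div_const 2
  refine this.congr_deriv ?_
  ring

lemma hasDerivAt_cosPhase (c : ℝ) {t : ℝ} (ht : 0 < t) :
    HasDerivAt (fun t => Real.cos (rsTheta t - c * t))
      (-Real.sin (rsTheta t - c * t) * (th1 t - c)) t := by
  have hin : HasDerivAt (fun t => rsTheta t - c * t) (th1 t - c) t := by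
    have := (hasDerivAt_rsTheta ht).sub ((hasDerivAt_id t).const_mul c)
    exact this.congr_deriv (by ring)
  have := (Real.hasDerivAt_cos (rsTheta t - c * t)).comp t hin
  exact this.congr_deriv (by ring)

lemma hasDerivAt_psi (c : ℝ) {t : ℝ} (ht : 0 < t) :
    HasDerivAt (fun t => -Real.sin (rsTheta t - c * t) * (th1 t - c))
      (-Real.cos (rsTheta t - c * t) * ((th1 t - c) * (th1 t - c)) -
        Real.sin (rsTheta t - c * t) * (1 / (2 * t))) t := by
  have hin : HasDerivAt (fun t => rsTheta t - c * t) (th1 t - c) t := by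
    have := (hasDerivAt_rsTheta ht).sub ((hasDerivAt_id t).const_mul c)
    exact this.congr_deriv (by ring)
  have hs : HasDerivAt (fun t => -Real.sin (rsTheta t - c * t))
      (-(Real.cos (rsTheta t - c * t) * (th1 t - c))) t := by
    have := ((Real.hasDerivAt_sin (rsTheta t - c * t)).comp t hin).neg
    exact this.congr_deriv (by ring)
  have := hs.mul ((hasDerivAt_th1 ht).sub_const c)
  refine this.congr_deriv ?_
  ring

noncomputable def Z1 (N : ℕ) (b : Fin N → ℝ) (t : ℝ) : ℝ :=
  -Real.sin (rsTheta t) * th1 t +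
    ∑ j : Fin N, b j / Real.sqrt ((j : ℕ) + 2) *
      (-Real.sin (rsTheta t - Real.log ((j : ℕ) + 2) * t) *
        (th1 t - Real.log ((j : ℕ) + 2)))

noncomputable def Z2 (N : ℕ) (b : Fin N → ℝ) (t : ℝ) : ℝ :=
  (-Real.cos (rsTheta t) * (th1 t * th1 t) - Real.sin (rsTheta t) * (1 / (2 * t))) +
    ∑ j : Fin N, b j / Real.sqrt ((j : ℕ) + 2) *
      (-Real.cos (rsTheta t - Real.log ((j : ℕ) + 2) * t) *
          ((th1 t - Real.log ((j : ℕ) + 2)) * (th1 t - Real.log ((j : ℕ) + 2))) -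
        Real.sin (rsTheta t - Real.log ((j : ℕ) + 2) * t) * (1 / (2 * t)))

lemma hasDerivAt_sectionZ (N : ℕ) (b : Fin N → ℝ) {t : ℝ} (ht : 0 < t) :
    HasDerivAt (fun t => sectionZ N t b) (Z1 N b t) t := by
  have h0 : HasDerivAt (fun t => Real.cos (rsTheta t)) (-Real.sin (rsTheta t) * th1 t) t := by
    have := (Real.hasDerivAt_cos (rsTheta t)).comp t (hasDerivAt_rsTheta ht)
    exact this.congr_deriv (by ring)
  have hsum : HasDerivAt (fun t => ∑ j : Fin N, b j / Real.sqrt ((j : ℕ) + 2) *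
      Real.cos (rsTheta t - Real.log ((j : ℕ) + 2) * t))
      (∑ j : Fin N, b j / Real.sqrt ((j : ℕ) + 2) *
        (-Real.sin (rsTheta t - Real.log ((j : ℕ) + 2) * t) *
          (th1 t - Real.log ((j : ℕ) + 2)))) t := by
    apply HasDerivAt.fun_sum
    intro j _
    exact (hasDerivAt_cosPhase (Real.log ((j : ℕ) + 2)) ht).const_mul _
  exact h0.add hsum

lemma hasDerivAt_Z1 (N : ℕ) (b : Fin N → ℝ) {t : ℝ} (ht : 0 < t) :
    HasDerivAt (Z1 N b) (Z2 N b t) t := by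
  have hsin : HasDerivAt (fun t => -Real.sin (rsTheta t) * th1 t)
      (-Real.cos (rsTheta t) * (th1 t * th1 t) - Real.sin (rsTheta t) * (1 / (2 * t))) t := by
    have hs : HasDerivAt (fun t => -Real.sin (rsTheta t))
        (-(Real.cos (rsTheta t) * th1 t)) t := by
      have := ((Real.hasDerivAt_sin (rsTheta t)).comp t (hasDerivAt_rsTheta ht)).neg
      exact this.congr_deriv (by ring)
    have := hs.mul (hasDerivAt_th1 ht)
    refine this.congr_deriv ?_
    ring
  have hsum : HasDerivAt (fun t => ∑ j : Fin N, b j / Real.sqrt ((j : ℕ) + 2) *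
      (-Real.sin (rsTheta t - Real.log ((j : ℕ) + 2) * t) *
        (th1 t - Real.log ((j : ℕ) + 2))))
      (∑ j : Fin N, b j / Real.sqrt ((j : ℕ) + 2) *
        (-Real.cos (rsTheta t - Real.log ((j : ℕ) + 2) * t) *
            ((th1 t - Real.log ((j : ℕ) + 2)) * (th1 t - Real.log ((j : ℕ) + 2))) -
          Real.sin (rsTheta t - Real.log ((j : ℕ) + 2) * t) * (1 / (2 * t)))) t := by
    apply HasDerivAt.fun_sum
    intro j _
    exact (hasDerivAt_psi (Real.log ((j : ℕ) + 2)) ht).const_mul _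
  exact hsin.add hsum

lemma Z1_perturb (N : ℕ) (k : Fin N) (a : Fin N → ℝ) (ε t : ℝ) :
    Z1 N (a + ε • (Pi.single k 1 : Fin N → ℝ)) t =
      Z1 N a t + ε / Real.sqrt ((k : ℕ) + 2) *
        (-Real.sin (rsTheta t - Real.log ((k : ℕ) + 2) * t) *
          (th1 t - Real.log ((k : ℕ) + 2))) := by
  unfold Z1
  have hsplit : ∀ j : Fin N,
      (a + ε • (Pi.single k 1 : Fin N → ℝ)) j / Real.sqrt ((j : ℕ) + 2) *
        (-Real.sin (rsTheta t - Real.log ((j : ℕ) + 2) * t) *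
          (th1 t - Real.log ((j : ℕ) + 2))) =
      a j / Real.sqrt ((j : ℕ) + 2) *
        (-Real.sin (rsTheta t - Real.log ((j : ℕ) + 2) * t) *
          (th1 t - Real.log ((j : ℕ) + 2))) +
      ε * (Pi.single k 1 : Fin N → ℝ) j / Real.sqrt ((j : ℕ) + 2) *
        (-Real.sin (rsTheta t - Real.log ((j : ℕ) + 2) * t) *
          (th1 t - Real.log ((j : ℕ) + 2))) := by
    intro j
    simp only [Pi.add_apply, Pi.smul_apply, smul_eq_mul, add_div, add_mul]
  rw [Finset.sum_congr rfl (fun j _ => hsplit j), Finset.sum_add_distrib]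
  have hsingle : ∑ j : Fin N, ε * (Pi.single k 1 : Fin N → ℝ) j / Real.sqrt ((j : ℕ) + 2) *
      (-Real.sin (rsTheta t - Real.log ((j : ℕ) + 2) * t) *
        (th1 t - Real.log ((j : ℕ) + 2))) =
      ε / Real.sqrt ((k : ℕ) + 2) *
        (-Real.sin (rsTheta t - Real.log ((k : ℕ) + 2) * t) *
          (th1 t - Real.log ((k : ℕ) + 2))) := by
    rw [Finset.sum_eq_single k]
    · simp
    · intro j _ hj
      simp [Pi.single_eq_of_ne hj]
    · simp
  rw [hsingle]
  ring


/-- Lemma 7.2: implicit derivative of the extended extremal point. If `g(ε)` is a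
critical point of `t ↦ Z_N(t; a + ε·eₖ)` for all small `ε`, `g` is differentiable at
`0` with `g(0) = g⋆ > 0`, and the second derivative `D` of `t ↦ Z_N(t; a)` at `g⋆` is
nonzero, then `g'(0) = sin(θ(g⋆) − log(k+1)·g⋆)·log(g⋆/(2π(k+1)²))/(2·√(k+1)·D)`.
In particular, if `a = 0` and `g⋆ > 2π` is a Gram point `θ(g⋆) = π·n`, then
`D = ((−1)^{n+1}/4)·log²(g⋆/(2π))` and
`g'(0) = 2·(−1)^{n+1}·sin(θ(g⋆) − log(k+1)·g⋆)·log(g⋆/(2π(k+1)²))/(√(k+1)·log²(g⋆/(2π)))`. -/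
theorem extremal_point_implicit_deriv (N : ℕ) (k : Fin N) (a : Fin N → ℝ)
    (gs : ℝ) (hgs : 0 < gs) (g : ℝ → ℝ) (hg : DifferentiableAt ℝ g 0)
    (hg0 : g 0 = gs)
    (hcrit : ∃ ε₀ > (0 : ℝ), ∀ ε : ℝ, |ε| < ε₀ →
      deriv (fun t => sectionZ N t (a + ε • (Pi.single k 1 : Fin N → ℝ))) (g ε) = 0)
    (hD : deriv (deriv (fun t => sectionZ N t a)) gs ≠ 0) :
    deriv g 0 =
      Real.sin (rsTheta gs - Real.log ((k : ℕ) + 2) * gs) *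
        Real.log (gs / (2 * Real.pi * ((k : ℕ) + 2) ^ 2)) /
        (2 * Real.sqrt ((k : ℕ) + 2) *
          deriv (deriv (fun t => sectionZ N t a)) gs) ∧
    (a = 0 → ∀ n : ℕ, 2 * Real.pi < gs → rsTheta gs = Real.pi * n →
      deriv (deriv (fun t => sectionZ N t a)) gs =
        ((-1 : ℝ) ^ (n + 1) / 4) * (Real.log (gs / (2 * Real.pi))) ^ 2 ∧
      deriv g 0 =
        2 * (-1 : ℝ) ^ (n + 1) *
          Real.sin (rsTheta gs - Real.log ((k : ℕ) + 2) * gs) *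
          Real.log (gs / (2 * Real.pi * ((k : ℕ) + 2) ^ 2)) /
          (Real.sqrt ((k : ℕ) + 2) * (Real.log (gs / (2 * Real.pi))) ^ 2)) := by
  obtain ⟨ε₀, hε₀, hcritAll⟩ := hcrit
  set c : ℝ := Real.log ((k : ℕ) + 2) with hc
  set s : ℝ := Real.sqrt ((k : ℕ) + 2) with hs
  have hkpos : (0:ℝ) < (k : ℕ) + 2 := by positivity
  have hspos : 0 < s := Real.sqrt_pos.2 hkpos
  -- second derivative value
  have hev : deriv (fun t => sectionZ N t a) =ᶠ[nhds gs] Z1 N a := by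
    filter_upwards [Ioi_mem_nhds hgs] with t ht
    exact (hasDerivAt_sectionZ N a ht).deriv
  have hDval : deriv (deriv (fun t => sectionZ N t a)) gs = Z2 N a gs := by
    rw [hev.deriv_eq]
    exact (hasDerivAt_Z1 N a hgs).deriv
  have hZ2ne : Z2 N a gs ≠ 0 := hDval ▸ hD
  -- the implicit equation near 0
  set ψ : ℝ → ℝ := fun t => -Real.sin (rsTheta t - c * t) * (th1 t - c) with hψ
  have hg0pos : 0 < g 0 := by rw [hg0]; exact hgs
  have hpos_ev : ∀ᶠ ε in nhds (0:ℝ), 0 < g ε :=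
    hg.continuousAt.eventually (eventually_gt_nhds hg0pos)
  have hsmall_ev : ∀ᶠ ε in nhds (0:ℝ), |ε| < ε₀ := by
    have := Metric.ball_mem_nhds (0:ℝ) hε₀
    filter_upwards [this] with ε hε
    simpa [Real.dist_eq] using hε
  have hGzero : (fun ε => Z1 N a (g ε) + ε / s * ψ (g ε)) =ᶠ[nhds (0:ℝ)]
      (fun _ => (0:ℝ)) := by
    filter_upwards [hpos_ev, hsmall_ev] with ε h1 h2
    have hd := (hasDerivAt_sectionZ N (a + ε • (Pi.single k 1 : Fin N → ℝ)) h1).deriv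
    have h0 := hcritAll ε h2
    rw [hd] at h0
    rw [Z1_perturb] at h0
    exact h0
  -- differentiate the implicit equation
  have hZ1d : HasDerivAt (Z1 N a) (Z2 N a gs) (g 0) := by
    rw [hg0]; exact hasDerivAt_Z1 N a hgs
  have hgd : HasDerivAt g (deriv g 0) 0 := hg.hasDerivAt
  have hcomp : HasDerivAt (fun ε => Z1 N a (g ε)) (Z2 N a gs * deriv g 0) 0 := by
    have := hZ1d.comp 0 hgd
    exact this.congr_deriv (by ring)
  have hψgs : HasDerivAt ψ
      (-Real.cos (rsTheta (g 0) - c * (g 0)) * ((th1 (g 0) - c) * (th1 (g 0) - c)) -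
        Real.sin (rsTheta (g 0) - c * (g 0)) * (1 / (2 * (g 0)))) (g 0) :=
    hasDerivAt_psi c hg0pos
  have hψcomp : HasDerivAt (fun ε => ψ (g ε))
      ((-Real.cos (rsTheta (g 0) - c * (g 0)) * ((th1 (g 0) - c) * (th1 (g 0) - c)) -
        Real.sin (rsTheta (g 0) - c * (g 0)) * (1 / (2 * (g 0)))) * deriv g 0) 0 := by
    have := hψgs.comp 0 hgd
    exact this.congr_deriv (by ring)
  have hεψ : HasDerivAt (fun ε => ε / s * ψ (g ε))
      (1 / s * ψ (g 0) + 0 / s *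
        ((-Real.cos (rsTheta (g 0) - c * (g 0)) * ((th1 (g 0) - c) * (th1 (g 0) - c)) -
          Real.sin (rsTheta (g 0) - c * (g 0)) * (1 / (2 * (g 0)))) * deriv g 0)) 0 :=
    (((hasDerivAt_id (0:ℝ)).div_const s)).mul hψcomp
  have hGd : HasDerivAt (fun ε => Z1 N a (g ε) + ε / s * ψ (g ε))
      (Z2 N a gs * deriv g 0 + (1 / s * ψ (g 0) + 0 / s *
        ((-Real.cos (rsTheta (g 0) - c * (g 0)) * ((th1 (g 0) - c) * (th1 (g 0) - c)) -
          Real.sin (rsTheta (g 0) - c * (g 0)) * (1 / (2 * (g 0)))) * deriv g 0))) 0 :=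
    hcomp.add hεψ
  have hkey : Z2 N a gs * deriv g 0 + 1 / s * ψ gs = 0 := by
    have h1 : deriv (fun ε => Z1 N a (g ε) + ε / s * ψ (g ε)) 0 = 0 := by
      rw [hGzero.deriv_eq]
      simp
    have h2 := hGd.deriv
    rw [h1] at h2
    rw [hg0] at h2
    have := h2.symm
    rw [zero_div, zero_mul, add_zero] at this
    exact this
  -- the log identity
  have hM : Real.log (gs / (2 * Real.pi * ((k : ℕ) + 2) ^ 2)) =
      Real.log (gs / (2 * Real.pi)) - 2 * c := by
    rw [hc, Real.log_div hgs.ne' (by positivity), Real.log_div hgs.ne' (by positivity),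
      Real.log_mul (by positivity) (by positivity), Real.log_pow]
    push_cast
    ring
  have hth1c : th1 gs - c = Real.log (gs / (2 * Real.pi * ((k : ℕ) + 2) ^ 2)) / 2 := by
    rw [hM]; unfold th1; ring
  -- part 1
  have part1 : deriv g 0 =
      Real.sin (rsTheta gs - c * gs) *
        Real.log (gs / (2 * Real.pi * ((k : ℕ) + 2) ^ 2)) /
        (2 * s * deriv (deriv (fun t => sectionZ N t a)) gs) := by
    rw [hDval]
    have hψval : ψ gs = -Real.sin (rsTheta gs - c * gs) * (th1 gs - c) := rfl
    rw [hψval, hth1c] at hkey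
    field_simp at hkey ⊢
    linarith [hkey]
  refine ⟨part1, ?_⟩
  intro ha n hgs2 hgram
  subst ha
  have hcosgs : Real.cos (rsTheta gs) = (-1 : ℝ) ^ n := by
    rw [hgram]
    have := Real.cos_add_nat_mul_pi 0 n
    simpa [mul_comm] using this
  have hsings : Real.sin (rsTheta gs) = 0 := by
    rw [hgram, mul_comm]
    exact Real.sin_nat_mul_pi n
  set L : ℝ := Real.log (gs / (2 * Real.pi)) with hL
  have hth1gs : th1 gs = L / 2 := rfl
  have hDv2 : Z2 N 0 gs = ((-1 : ℝ) ^ (n + 1) / 4) * L ^ 2 := by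
    unfold Z2
    simp only [Pi.zero_apply, zero_div, zero_mul, Finset.sum_const_zero, add_zero]
    rw [hcosgs, hsings, hth1gs]
    rw [pow_succ]
    ring
  have hDfin : deriv (deriv (fun t => sectionZ N t 0)) gs =
      ((-1 : ℝ) ^ (n + 1) / 4) * L ^ 2 := by rw [hDval, hDv2]
  refine ⟨hDfin, ?_⟩
  have hLpos : 0 < L := Real.log_pos ((one_lt_div (by positivity)).2 hgs2)
  have hcne : ((-1 : ℝ) ^ (n + 1)) ≠ 0 := pow_ne_zero _ (by norm_num)
  have hc2 : ((-1 : ℝ) ^ (n + 1)) ^ 2 = 1 := by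
    rw [← pow_mul, mul_comm, pow_mul]
    norm_num
  rw [part1, hDfin]
  rw [div_eq_div_iff (by positivity) (by positivity)]
  linear_combination (-(Real.sin (rsTheta gs - c * gs) *
    Real.log (gs / (2 * Real.pi * ((k : ℕ) + 2) ^ 2)) * s * L ^ 2)) * hc2
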